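/- Let q = 2^m for a positive integer m. Then the polynomial f(x) = x^2 + x + x^q + x^{q^2+q} + x^{q^2+1} is a permutation polynomial of F_{q^3} if and only if m is not congruent to 1 modulo 3. -/

import Mathlib

private lemma nt_mod (m : ℕ) : 2 ^ m % 7 = 2 ^ (m % 3) % 7 := by
  conv_lhs => rw [← Nat.div_add_mod m 3, pow_add, pow_mul]
  rw [Nat.mul_mod, Nat.pow_mod]
  norm_num

private lemma ntA (m : ℕ) (h : m % 3 = 1) : 2 ^ m % 7 = 2 := by
  rw [nt_mod, h]
  norm_num

private lemma ntB (m : ℕ) (h : 2 ^ m % 7 = 2) : m % 3 = 1 := by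
  have h1 := nt_mod m
  have h2 : m % 3 = 0 ∨ m % 3 = 1 ∨ m % 3 = 2 := by omega
  rcases h2 with h2 | h2 | h2 <;> rw [h2] at h1 <;> norm_num at h1 <;> omega

theorem stmt_4 (m : ℕ) (hm : 0 < m) (q : ℕ) (hq : q = 2 ^ m)
    (F : Type*) [Field F] [Fintype F] (hF : Fintype.card F = q ^ 3) :
    Function.Bijective
      (fun x : F => x ^ 2 + x + x ^ q + x ^ (q ^ 2 + q) + x ^ (q ^ 2 + 1))
      ↔ m % 3 ≠ 1 := by
  set f : F → F := fun x : F => x ^ 2 + x + x ^ q + x ^ (q ^ 2 + q) + x ^ (q ^ 2 + 1)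
    with hfdef
  have hq2 : 2 ≤ q := by
    rw [hq]
    calc 2 = 2 ^ 1 := (pow_one 2).symm
    _ ≤ 2 ^ m := Nat.pow_le_pow_right (by norm_num) hm
  have htwo : (2 : F) = 0 := by
    have hc : ((Fintype.card F : ℕ) : F) = 0 := FiniteField.cast_card_eq_zero F
    rw [hF] at hc
    push_cast at hc
    have hqF : (q : F) = 0 := pow_eq_zero_iff (by norm_num) |>.mp hc
    rw [hq] at hqF
    push_cast at hqF
    exact pow_eq_zero_iff (by omega) |>.mp hqF
  have hsq : ∀ s t : F, (s + t) ^ 2 = s ^ 2 + t ^ 2 := fun s t => by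
    linear_combination s * t * htwo
  have hfrob2 : ∀ (k : ℕ) (x y : F), (x + y) ^ 2 ^ k = x ^ 2 ^ k + y ^ 2 ^ k := by
    intro k
    induction k with
    | zero => intro x y; simp
    | succ n ih =>
      intro x y
      rw [pow_succ, pow_mul, pow_mul, pow_mul, ih, hsq]
  have hfrob : ∀ x y : F, (x + y) ^ q = x ^ q + y ^ q := by
    intro x y; rw [hq]; exact hfrob2 m x y
  have hcube : ∀ x : F, ((x ^ q) ^ q) ^ q = x := by
    intro x
    rw [← pow_mul, ← pow_mul]
    rw [show q * (q * q) = Fintype.card F from by rw [hF]; ring]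
    exact FiniteField.pow_card x
  have hmulq : ∀ x y : F, (x * y) ^ q = x ^ q * y ^ q := fun x y => mul_pow x y q
  have hsqq : ∀ x : F, (x ^ 2) ^ q = (x ^ q) ^ 2 := fun x => by
    rw [← pow_mul, ← pow_mul, mul_comm]
  have hf : ∀ z : F, f z = z ^ 2 + z + z ^ q + (z ^ q) ^ q * z ^ q + (z ^ q) ^ q * z := by
    intro z
    simp only [hfdef]
    rw [pow_add, pow_add, pow_one, show q ^ 2 = q * q from pow_two q, pow_mul]
  have hcol : ∀ x d : F, (d ^ q) ^ q = d + d ^ q →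
      f (x + d) + f x =
        d + d ^ q + (d ^ q) ^ 2 + (d + d ^ q) * (x + x ^ q + (x ^ q) ^ q) := by
    intro x d hd
    rw [hf (x + d), hf x, hfrob x d, hfrob (x ^ q) (d ^ q), hd]
    linear_combination (x ^ 2 + x + x ^ q + x ^ q * ((x ^ q) ^ q) + (x ^ q) ^ q * x
      + d ^ 2 + d * d ^ q + d * x) * htwo
  have hfq : ∀ z : F,
      (f z) ^ q = (z ^ q) ^ 2 + z ^ q + (z ^ q) ^ q + z * ((z ^ q) ^ q) + z * z ^ q := by
    intro z
    rw [hf z, hfrob, hfrob, hfrob, hfrob, hmulq, hmulq, hsqq, hcube]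
  have hTsq : ∀ z : F,
      f z + (f z) ^ q + ((f z) ^ q) ^ q = (z + z ^ q + (z ^ q) ^ q) ^ 2 := by
    intro z
    have h2' : ((f z) ^ q) ^ q
        = ((z ^ q) ^ q) ^ 2 + (z ^ q) ^ q + z + z ^ q * z + z ^ q * ((z ^ q) ^ q) := by
      rw [hfq z, hfrob, hfrob, hfrob, hfrob, hmulq, hmulq, hsqq, hcube]
    rw [h2', hfq z, hf z]
    linear_combination (z + z ^ q + (z ^ q) ^ q) * htwo
  constructor
  · -- Bijective → m % 3 ≠ 1
    intro hbij hm31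
    have hq7 : q % 7 = 2 := by rw [hq]; exact ntA m hm31
    have hq27 : q ^ 2 % 7 = 4 := by rw [Nat.pow_mod, hq7]
    have h7dvd : (7 : ℕ) ∣ q ^ 2 + q + 1 := by omega
    obtain ⟨r, hr⟩ := h7dvd
    have hq2sq : 4 ≤ q ^ 2 := by nlinarith
    have hr1 : 1 ≤ r := by omega
    obtain ⟨g, hg⟩ := IsCyclic.exists_generator (α := Fˣ)
    have hgord : orderOf g = (q - 1) * (7 * r) := by
      rw [orderOf_eq_card_of_forall_mem_zpowers hg, Nat.card_units,
        Nat.card_eq_fintype_card, hF, ← hr]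
      zify [show 1 ≤ q from by omega, show 1 ≤ q ^ 3 from Nat.one_le_pow _ _ (by omega)]
      ring
    set G : F := (g : F) with hG
    have hGn : G ^ ((q - 1) * (7 * r)) = 1 := by
      rw [hG, ← Units.val_pow_eq_pow_val, ← hgord, pow_orderOf_eq_one, Units.val_one]
    have hGk : ∀ k : ℕ, G ^ k = 1 → ((q - 1) * (7 * r)) ∣ k := by
      intro k hk
      have h1 : (g ^ k : Fˣ) = 1 :=
        Units.val_eq_one.mp (by rw [Units.val_pow_eq_pow_val]; exact hk)
      rw [← hgord]
      exact orderOf_dvd_of_pow_eq_one h1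
    set u₀ : F := G ^ ((q - 1) * r) with hu₀
    have hu₀7 : u₀ ^ 7 = 1 := by
      rw [hu₀, ← pow_mul, show (q - 1) * r * 7 = (q - 1) * (7 * r) from by ring]
      exact hGn
    have hu₀ne1 : u₀ ≠ 1 := by
      intro h1
      have hdvd := hGk _ (hu₀ ▸ h1)
      set B := (q - 1) * r with hB
      have hBpos : 0 < B := Nat.mul_pos (by omega) (by omega)
      have hle : (q - 1) * (7 * r) ≤ B := Nat.le_of_dvd hBpos hdvd
      have hBeq : (q - 1) * (7 * r) = 7 * B := by rw [hB]; ring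
      omega
    have hfac : (u₀ + 1) * ((u₀ ^ 3 + u₀ + 1) * (u₀ ^ 3 + u₀ ^ 2 + 1)) = 0 := by
      linear_combination hu₀7
        + (1 + u₀ + u₀ ^ 2 + 2 * u₀ ^ 3 + 2 * u₀ ^ 4 + u₀ ^ 5 + u₀ ^ 6) * htwo
    have hne0 : u₀ + 1 ≠ 0 := by
      intro h0
      exact hu₀ne1 (by linear_combination h0 - htwo)
    have hfac2 : (u₀ ^ 3 + u₀ + 1) * (u₀ ^ 3 + u₀ ^ 2 + 1) = 0 := by
      rcases mul_eq_zero.mp hfac with h | h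
      · exact absurd h hne0
      · exact h
    have hmain : ∀ u d : F, d ≠ 0 → d ^ q = u * d → u ^ 7 = 1 → u ^ 3 + u + 1 = 0 → False := by
      intro u d hd0 hdq hu7 hcub
      obtain ⟨t, ht⟩ : ∃ t, q = 7 * t + 2 := ⟨q / 7, by omega⟩
      have huq : u ^ q = u ^ 2 := by
        conv_lhs => rw [ht]
        rw [pow_add, pow_mul, hu7, one_pow, one_mul]
      have htr : (d ^ q) ^ q = d + d ^ q := by
        rw [hdq, hmulq, huq, hdq]
        linear_combination d * hcub - (d + u * d) * htwo
      set c₀ : F := 1 + d * u ^ 6 with hc₀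
      have hc₀q : c₀ ^ q = c₀ := by
        rw [hc₀, hfrob 1 (d * u ^ 6), one_pow, hmulq, hdq,
          show (u ^ 6) ^ q = (u ^ q) ^ 6 from by rw [← pow_mul, ← pow_mul, mul_comm], huq]
        linear_combination u ^ 6 * d * hu7
      have hzero : d + d ^ q + (d ^ q) ^ 2
          + (d + d ^ q) * (c₀ + c₀ ^ q + (c₀ ^ q) ^ q) = 0 := by
        simp only [hc₀q]
        rw [hdq, hc₀]
        linear_combination d ^ 2 * hu7 + d ^ 2 * (u ^ 3 + u + 1) * hcub
          + (2 * d + 2 * d * u - d ^ 2 * u - d ^ 2 * u ^ 3 - d ^ 2 * u ^ 4 + d ^ 2 * u ^ 6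
            + d ^ 2 * u ^ 7) * htwo
      have hcol3 := hcol c₀ d htr
      rw [hzero] at hcol3
      have hEq : f (c₀ + d) = f c₀ := by
        linear_combination hcol3 - (f c₀) * htwo
      have hinj := hbij.injective hEq
      exact hd0 (by linear_combination hinj)
    rcases mul_eq_zero.mp hfac2 with hcase | hcase
    · apply hmain u₀ (G ^ r) (pow_ne_zero _ (by rw [hG]; exact g.ne_zero)) ?_ hu₀7 hcase
      rw [← pow_mul, hu₀, ← pow_add]
      congr 1
      zify [show 1 ≤ q from by omega]
      ring
    · apply hmain (u₀ ^ 6) (G ^ (r * 6)) (pow_ne_zero _ (by rw [hG]; exact g.ne_zero)) ?_ ?_ ?_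
      · rw [← pow_mul, hu₀, ← pow_mul, ← pow_add]
        congr 1
        zify [show 1 ≤ q from by omega]
        ring
      · rw [← pow_mul, show 6 * 7 = 7 * 6 from by norm_num, pow_mul, hu₀7, one_pow]
      · linear_combination (u₀ ^ 11 + u₀ ^ 4) * hu₀7 + (u₀ ^ 3 + u₀ ^ 2 + 1) * hcase
          - (u₀ ^ 2 + u₀ ^ 3 + u₀ ^ 5) * htwo
  · -- m % 3 ≠ 1 → Bijective
    intro hm3
    rw [← Finite.injective_iff_bijective]
    intro x y hxy
    by_contra hne
    have hS : (x + x ^ q + (x ^ q) ^ q) ^ 2 = (y + y ^ q + (y ^ q) ^ q) ^ 2 := by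
      rw [← hTsq x, ← hTsq y, hxy]
    have hSR : (x + x ^ q + (x ^ q) ^ q) + (y + y ^ q + (y ^ q) ^ q) = 0 := by
      have h0 : ((x + x ^ q + (x ^ q) ^ q) + (y + y ^ q + (y ^ q) ^ q)) ^ 2 = 0 := by
        rw [hsq]
        linear_combination hS + ((y + y ^ q + (y ^ q) ^ q) ^ 2) * htwo
      exact pow_eq_zero_iff (by norm_num) |>.mp h0
    have heqd : ((x + y) ^ q) ^ q = (x + y) + (x + y) ^ q := by
      rw [hfrob x y, hfrob (x ^ q) (y ^ q)]
      linear_combination hSR - (x + y + x ^ q + y ^ q) * htwo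
    have hyx : x + (x + y) = y := by linear_combination x * htwo
    have hcol2 := hcol x (x + y) heqd
    rw [hyx, hxy] at hcol2
    set d : F := x + y with hd
    set e : F := d ^ q with he
    set c : F := x + x ^ q + (x ^ q) ^ q with hc
    clear_value d e c
    have heq2 : d + e + e ^ 2 + (d + e) * c = 0 := by
      linear_combination (f y) * htwo - hcol2
    have hd0 : d ≠ 0 := by
      intro h0
      rw [hd] at h0
      exact hne (by linear_combination h0 - y * htwo)
    have he0 : e ≠ 0 := by rw [he]; exact pow_ne_zero q hd0
    have hcq : c ^ q = c := by
      rw [hc, hfrob, hfrob, hcube]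
      ring
    have h3 : (d + e) * (1 + c) = e ^ 2 := by
      linear_combination heq2 - e ^ 2 * htwo
    have h6 : ((d + e) * (1 + c)) ^ q = (e ^ 2) ^ q := by rw [h3]
    rw [hmulq, hfrob d e, hfrob 1 c, one_pow, hcq, hsqq e, heqd, ← he] at h6
    have h4 : (d + e) ^ 2 = d * (1 + c) := by
      linear_combination (e + c * e) * htwo - h6
    have hcubic3 : d ^ 3 + d ^ 2 * e + e ^ 3 = 0 := by
      linear_combination d * h3 + (d + e) * h4 - (d ^ 2 * e + d * e ^ 2) * htwo
    set u : F := e * d⁻¹ with hu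
    clear_value u
    have hu0 : u ≠ 0 := by rw [hu]; exact mul_ne_zero he0 (inv_ne_zero hd0)
    have hu3 : u ^ 3 + u + 1 = 0 := by
      rw [hu]
      field_simp
      linear_combination hcubic3
    have huq : u ^ q = (d + e) * e⁻¹ := by
      rw [hu, hmulq, inv_pow, heqd, ← he]
    have hq1 : u ^ (q + 1) = 1 + u := by
      rw [pow_succ, huq, hu]
      field_simp
    have hu3' : u ^ 3 = u + 1 := by linear_combination hu3 - (u + 1) * htwo
    have hqm2 : u ^ (q - 2) = 1 := by
      have h7 : u ^ (q - 2) * u ^ 3 = 1 * u ^ 3 := by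
        rw [← pow_add, show q - 2 + 3 = q + 1 from by omega, hq1, one_mul, hu3']
        ring
      exact mul_right_cancel₀ (pow_ne_zero 3 hu0) h7
    have hu7 : u ^ 7 = 1 := by
      linear_combination (u ^ 4 + u ^ 2 + u + 1) * hu3
        - (1 + u + u ^ 2 + u ^ 3 + u ^ 4 + u ^ 5) * htwo
    have hune1 : u ≠ 1 := by
      intro h1
      rw [h1] at hu3
      exact one_ne_zero (α := F) (by linear_combination hu3 - htwo)
    have hord : orderOf u = 7 := by
      have hdv : orderOf u ∣ 7 := orderOf_dvd_of_pow_eq_one hu7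
      rcases (Nat.Prime.eq_one_or_self_of_dvd (by norm_num) _ hdv) with h | h
      · exact absurd (orderOf_eq_one_iff.mp h) hune1
      · exact h
    have hdvd : (7 : ℕ) ∣ q - 2 := by
      rw [← hord]
      exact orderOf_dvd_of_pow_eq_one hqm2
    have hq7 : q % 7 = 2 := by omega
    exact hm3 (ntB m (by rw [← hq]; exact hq7))
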